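/- For every quaternion α with |α| < 1, the Blaschke factor b_α(z) = (z−α)·Σ_{k≥0} \bar{α}^k z^k is a bi-inner power series: for every h ∈ H² (power series with square-summable quaternion coefficients), ‖b_α · h‖_{H²} = ‖h‖_{H²} = ‖h · b_α‖_{H²}. -/

import Mathlib

open Quaternion Filter

lemma key1 (a u v : Quaternion ℝ) :
    ‖u - a * v‖ ^ 2 - ‖v - star a * u‖ ^ 2 = (1 - ‖a‖ ^ 2) * (‖u‖ ^ 2 - ‖v‖ ^ 2) := by
  have e : ∀ x : Quaternion ℝ, ‖x‖ ^ 2 = normSq x := fun x => by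
    rw [sq, ← Quaternion.normSq_eq_norm_mul_self]
  simp only [e]
  simp only [Quaternion.normSq_def', Quaternion.re_mul, Quaternion.imI_mul,
    Quaternion.imJ_mul, Quaternion.imK_mul, Quaternion.re_sub, Quaternion.imI_sub,
    Quaternion.imJ_sub, Quaternion.imK_sub, Quaternion.re_star, Quaternion.imI_star,
    Quaternion.imJ_star, Quaternion.imK_star]
  ring

lemma key2 (a u v : Quaternion ℝ) :
    ‖u - v * a‖ ^ 2 - ‖v - u * star a‖ ^ 2 = (1 - ‖a‖ ^ 2) * (‖u‖ ^ 2 - ‖v‖ ^ 2) := by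
  have e : ∀ x : Quaternion ℝ, ‖x‖ ^ 2 = normSq x := fun x => by
    rw [sq, ← Quaternion.normSq_eq_norm_mul_self]
  simp only [e]
  simp only [Quaternion.normSq_def', Quaternion.re_mul, Quaternion.imI_mul,
    Quaternion.imJ_mul, Quaternion.imK_mul, Quaternion.re_sub, Quaternion.imI_sub,
    Quaternion.imJ_sub, Quaternion.imK_sub, Quaternion.re_star, Quaternion.imI_star,
    Quaternion.imJ_star, Quaternion.imK_star]
  ring


section
variable (α : Quaternion ℝ) (h : ℕ → Quaternion ℝ)

lemma comm_pow (β : Quaternion ℝ) (m : ℕ) : β * (star β) ^ m = (star β) ^ m * β := by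
  have hc : β * star β = star β * β := by
    rw [Quaternion.self_mul_star, Quaternion.star_mul_self]
  induction m with
  | zero => simp
  | succ k ih => rw [pow_succ, ← mul_assoc, ih, mul_assoc, hc, ← mul_assoc]

noncomputable def bfun : ℕ → Quaternion ℝ := fun k =>
  if k = 0 then -α else ((1 - ‖α‖ ^ 2 : ℝ) : Quaternion ℝ) * (star α) ^ (k - 1)

noncomputable def pfun : ℕ → Quaternion ℝ := fun n =>
  ∑ j ∈ Finset.range n, (star α) ^ j * h (n - 1 - j)

noncomputable def qfun : ℕ → Quaternion ℝ := fun n =>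
  ∑ j ∈ Finset.range n, h (n - 1 - j) * (star α) ^ j

lemma pfun_succ (n : ℕ) : pfun α h (n + 1) = star α * pfun α h n + h n := by
  have e : pfun α h (n + 1) = ∑ j ∈ Finset.range (n + 1), (star α) ^ j * h (n - j) := by
    apply Finset.sum_congr rfl; intro j hj; congr 2
  rw [e, Finset.sum_range_succ', pfun, Finset.mul_sum]
  simp only [pow_zero, one_mul, Nat.sub_zero, pow_succ', mul_assoc]
  congr 1
  apply Finset.sum_congr rfl; intro j hj; congr 3
  omega

lemma qfun_succ (n : ℕ) : qfun α h (n + 1) = qfun α h n * star α + h n := by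
  have e : qfun α h (n + 1) = ∑ j ∈ Finset.range (n + 1), h (n - j) * (star α) ^ j := by
    apply Finset.sum_congr rfl; intro j hj; congr 2
  rw [e, Finset.sum_range_succ', qfun, Finset.sum_mul]
  simp only [pow_zero, mul_one, Nat.sub_zero, pow_succ, ← mul_assoc]
  congr 1
  apply Finset.sum_congr rfl; intro j hj; congr 3
  omega

lemma coe_fact (hα : ‖α‖ < 1) :
    ((1 - ‖α‖ ^ 2 : ℝ) : Quaternion ℝ) = 1 - α * star α := by
  have h1 : α * star α = ((‖α‖ ^ 2 : ℝ) : Quaternion ℝ) := by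
    rw [Quaternion.self_mul_star, Quaternion.normSq_eq_norm_mul_self, sq]
  rw [h1]
  push_cast
  ring

lemma bfun_succ (hα : ‖α‖ < 1) (j : ℕ) :
    bfun α (j + 1) = (star α) ^ j - α * (star α) ^ (j + 1) := by
  rw [bfun]
  simp only [Nat.succ_ne_zero, if_false, Nat.add_sub_cancel]
  rw [coe_fact α hα, sub_mul, one_mul, pow_succ', mul_assoc]

lemma bh_eq (hα : ‖α‖ < 1) (n : ℕ) :
    ∑ j ∈ Finset.range (n + 1), bfun α j * h (n - j)
      = pfun α h n - α * pfun α h (n + 1) := by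
  rw [Finset.sum_range_succ']
  have e : ∀ j ∈ Finset.range n, bfun α (j + 1) * h (n - (j + 1))
      = (star α) ^ j * h (n - 1 - j) - α * ((star α) ^ (j + 1) * h (n - 1 - j)) := by
    intro j hj
    have hn : n - (j + 1) = n - 1 - j := by omega
    rw [hn, bfun_succ α hα, sub_mul, mul_assoc]
  rw [Finset.sum_congr rfl e, Finset.sum_sub_distrib, ← Finset.mul_sum]
  have e2 : pfun α h (n + 1) = (∑ j ∈ Finset.range n, (star α) ^ (j + 1) * h (n - 1 - j)) + h n := by
    rw [pfun_succ, pfun, Finset.mul_sum]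
    congr 1
    apply Finset.sum_congr rfl; intro j hj
    rw [pow_succ', mul_assoc]
  rw [e2]
  have b0 : bfun α 0 = -α := rfl
  rw [b0, pfun]
  simp only [Nat.sub_zero, mul_add, neg_mul]
  abel

lemma hb_eq (hα : ‖α‖ < 1) (n : ℕ) :
    ∑ j ∈ Finset.range (n + 1), h j * bfun α (n - j)
      = qfun α h n - qfun α h (n + 1) * α := by
  have refl : ∑ j ∈ Finset.range (n + 1), h j * bfun α (n - j)
      = ∑ j ∈ Finset.range (n + 1), h (n - j) * bfun α j := by
    rw [← Finset.sum_range_reflect (fun j => h j * bfun α (n - j)) (n + 1)]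
    apply Finset.sum_congr rfl; intro j hj
    simp only [Finset.mem_range] at hj
    congr 2 <;> omega
  rw [refl, Finset.sum_range_succ']
  have e : ∀ j ∈ Finset.range n, h (n - (j + 1)) * bfun α (j + 1)
      = h (n - 1 - j) * (star α) ^ j - (h (n - 1 - j) * (star α) ^ (j + 1)) * α := by
    intro j hj
    have hn : n - (j + 1) = n - 1 - j := by omega
    rw [hn, bfun_succ α hα, mul_sub]
    rw [comm_pow, mul_assoc]
  rw [Finset.sum_congr rfl e, Finset.sum_sub_distrib, ← Finset.sum_mul]
  have e2 : qfun α h (n + 1) = (∑ j ∈ Finset.range n, h (n - 1 - j) * (star α) ^ (j + 1)) + h n := by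
    rw [qfun_succ, qfun, Finset.sum_mul]
    congr 1
    apply Finset.sum_congr rfl; intro j hj
    rw [pow_succ, mul_assoc]
  rw [e2]
  have b0 : bfun α 0 = -α := rfl
  rw [b0, qfun]
  simp only [Nat.sub_zero, add_mul, mul_neg]
  abel

end

lemma master (α : Quaternion ℝ) (hα : ‖α‖ < 1) (h : ℕ → Quaternion ℝ)
    (hh : Summable fun j => ‖h j‖ ^ 2) (c p : ℕ → Quaternion ℝ) (hp0 : p 0 = 0)
    (hrec : ∀ n, ‖p (n + 1)‖ ≤ ‖α‖ * ‖p n‖ + ‖h n‖)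
    (hkey : ∀ n, ‖c n‖ ^ 2 = ‖h n‖ ^ 2 + (1 - ‖α‖ ^ 2) * (‖p n‖ ^ 2 - ‖p (n + 1)‖ ^ 2)) :
    (Summable fun n => ‖c n‖ ^ 2) ∧ (∑' n, ‖c n‖ ^ 2) = ∑' n, ‖h n‖ ^ 2 := by
  have hαpos : (0:ℝ) < 1 - ‖α‖ ^ 2 := by nlinarith [norm_nonneg α]
  have hstar : ∀ N, ∑ n ∈ Finset.range N, ‖c n‖ ^ 2
      = ∑ n ∈ Finset.range N, ‖h n‖ ^ 2 - (1 - ‖α‖ ^ 2) * ‖p N‖ ^ 2 := by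
    intro N
    induction N with
    | zero => simp [hp0]
    | succ N ih =>
      rw [Finset.sum_range_succ, Finset.sum_range_succ, ih, hkey N]; ring
  have hHle : ∀ N, ∑ n ∈ Finset.range N, ‖h n‖ ^ 2 ≤ ∑' n, ‖h n‖ ^ 2 := fun N =>
    Summable.sum_le_tsum _ (fun i _ => sq_nonneg _) hh
  have hble : ∀ N, ∑ n ∈ Finset.range N, ‖c n‖ ^ 2 ≤ ∑' n, ‖h n‖ ^ 2 := by
    intro N
    rw [hstar N]
    have := mul_nonneg hαpos.le (sq_nonneg ‖p N‖)
    linarith [hHle N]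
  have hsum : Summable fun n => ‖c n‖ ^ 2 :=
    summable_of_sum_range_le (fun n => sq_nonneg _) hble
  refine ⟨hsum, ?_⟩
  set H := ∑' n, ‖h n‖ ^ 2 with hH
  set B := ∑' n, ‖c n‖ ^ 2 with hB
  have htB : Tendsto (fun N => ∑ n ∈ Finset.range N, ‖c n‖ ^ 2) atTop (nhds B) :=
    hsum.hasSum.tendsto_sum_nat
  have htH : Tendsto (fun N => ∑ n ∈ Finset.range N, ‖h n‖ ^ 2) atTop (nhds H) :=
    hh.hasSum.tendsto_sum_nat
  have htp : Tendsto (fun N => ‖p N‖ ^ 2) atTop (nhds ((H - B) / (1 - ‖α‖ ^ 2))) := by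
    have : Tendsto (fun N => (∑ n ∈ Finset.range N, ‖h n‖ ^ 2
        - ∑ n ∈ Finset.range N, ‖c n‖ ^ 2) / (1 - ‖α‖ ^ 2)) atTop
        (nhds ((H - B) / (1 - ‖α‖ ^ 2))) := (htH.sub htB).div_const _
    refine this.congr (fun N => ?_)
    rw [hstar N]; field_simp; ring
  set L := (H - B) / (1 - ‖α‖ ^ 2) with hL
  have hLnn : 0 ≤ L := by
    have hBH : B ≤ H := Real.tsum_le_of_sum_range_le (fun n => sq_nonneg _) hble
    exact div_nonneg (by linarith) hαpos.le
  have htpn : Tendsto (fun N => ‖p N‖) atTop (nhds (Real.sqrt L)) := by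
    have := (Real.continuous_sqrt.continuousAt.tendsto.comp htp)
    refine this.congr (fun N => ?_)
    simp [Real.sqrt_sq (norm_nonneg _)]
  have hh0 : Tendsto (fun n => ‖h n‖) atTop (nhds 0) := by
    have h2 := hh.tendsto_atTop_zero
    have := (Real.continuous_sqrt.continuousAt.tendsto.comp h2)
    simp only [Function.comp, Real.sqrt_zero] at this ⊢
    refine this.congr (fun n => ?_)
    simp [Real.sqrt_sq (norm_nonneg _)]
  have hineq : Real.sqrt L ≤ ‖α‖ * Real.sqrt L := by
    have h1 : Tendsto (fun n => ‖p (n + 1)‖) atTop (nhds (Real.sqrt L)) :=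
      htpn.comp (tendsto_add_atTop_nat 1)
    have h2 : Tendsto (fun n => ‖α‖ * ‖p n‖ + ‖h n‖) atTop (nhds (‖α‖ * Real.sqrt L + 0)) :=
      (htpn.const_mul _).add hh0
    have := le_of_tendsto_of_tendsto' h1 h2 hrec
    linarith
  have hL0 : L = 0 := by
    have hs := Real.sqrt_nonneg L
    have : Real.sqrt L = 0 := by nlinarith
    have := Real.sqrt_eq_zero hLnn |>.mp this
    exact this
  have : H - B = 0 := by
    rw [hL, div_eq_zero_iff] at hL0
    rcases hL0 with h1 | h1
    · exact h1
    · linarith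
  linarith

/-- The Blaschke factor `b_α(z) = (z−α)·Σ ᾱ^k z^k` (|α| < 1), whose coefficient
sequence is `b₀ = −α`, `b_k = (1−|α|²) ᾱ^{k−1}` for `k ≥ 1`, is bi-inner: left and
right multiplication by it preserves the H² norm. -/
theorem stmt17 (α : Quaternion ℝ) (hα : ‖α‖ < 1) (h : ℕ → Quaternion ℝ)
    (hh : Summable fun j => ‖h j‖ ^ 2) :
    let b : ℕ → Quaternion ℝ := fun k =>
      if k = 0 then -α else ((1 - ‖α‖ ^ 2 : ℝ) : Quaternion ℝ) * (star α) ^ (k - 1)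
    let bh : ℕ → Quaternion ℝ := fun n => ∑ j ∈ Finset.range (n + 1), b j * h (n - j)
    let hb : ℕ → Quaternion ℝ := fun n => ∑ j ∈ Finset.range (n + 1), h j * b (n - j)
    (Summable fun n => ‖bh n‖ ^ 2) ∧ (Summable fun n => ‖hb n‖ ^ 2) ∧
    (∑' n, ‖bh n‖ ^ 2) = (∑' n, ‖h n‖ ^ 2) ∧
    (∑' n, ‖hb n‖ ^ 2) = (∑' n, ‖h n‖ ^ 2) := by
  intro b bh hb
  have hp0 : pfun α h 0 = 0 := by simp [pfun]
  have hq0 : qfun α h 0 = 0 := by simp [qfun]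
  have hprec : ∀ n, ‖pfun α h (n + 1)‖ ≤ ‖α‖ * ‖pfun α h n‖ + ‖h n‖ := by
    intro n
    rw [pfun_succ]
    calc ‖star α * pfun α h n + h n‖ ≤ ‖star α * pfun α h n‖ + ‖h n‖ := norm_add_le _ _
      _ = ‖α‖ * ‖pfun α h n‖ + ‖h n‖ := by rw [norm_mul, norm_star]
  have hqrec : ∀ n, ‖qfun α h (n + 1)‖ ≤ ‖α‖ * ‖qfun α h n‖ + ‖h n‖ := by
    intro n
    rw [qfun_succ]
    calc ‖qfun α h n * star α + h n‖ ≤ ‖qfun α h n * star α‖ + ‖h n‖ := norm_add_le _ _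
      _ = ‖α‖ * ‖qfun α h n‖ + ‖h n‖ := by rw [norm_mul, norm_star, mul_comm]
  have hhp : ∀ n, h n = pfun α h (n + 1) - star α * pfun α h n := by
    intro n; rw [pfun_succ]; abel
  have hhq : ∀ n, h n = qfun α h (n + 1) - qfun α h n * star α := by
    intro n; rw [qfun_succ]; abel
  have hpkey : ∀ n, ‖∑ j ∈ Finset.range (n + 1), bfun α j * h (n - j)‖ ^ 2
      = ‖h n‖ ^ 2 + (1 - ‖α‖ ^ 2) * (‖pfun α h n‖ ^ 2 - ‖pfun α h (n + 1)‖ ^ 2) := by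
    intro n
    have hk := key1 α (pfun α h n) (pfun α h (n + 1))
    rw [← bh_eq α h hα n, ← hhp n] at hk
    linarith
  have hqkey : ∀ n, ‖∑ j ∈ Finset.range (n + 1), h j * bfun α (n - j)‖ ^ 2
      = ‖h n‖ ^ 2 + (1 - ‖α‖ ^ 2) * (‖qfun α h n‖ ^ 2 - ‖qfun α h (n + 1)‖ ^ 2) := by
    intro n
    have hk := key2 α (qfun α h n) (qfun α h (n + 1))
    rw [← hb_eq α h hα n, ← hhq n] at hk
    linarith
  obtain ⟨s1, e1⟩ := master α hα h hh
    (fun n => ∑ j ∈ Finset.range (n + 1), bfun α j * h (n - j)) (pfun α h) hp0 hprec hpkey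
  obtain ⟨s2, e2⟩ := master α hα h hh
    (fun n => ∑ j ∈ Finset.range (n + 1), h j * bfun α (n - j)) (qfun α h) hq0 hqrec hqkey
  exact ⟨s1, s2, e1, e2⟩
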